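/- In a finite join-distributive lattice, for any p covered by distinct p1 and p2, every saturated chain from p to p1 ∨ p2 has length exactly 2 (i.e., passes through exactly one of p1, p2). -/

import Mathlib

variable {α : Type*}

/-- A saturated chain from `x` to `y`: a list starting at `x`, ending at `y`, each
consecutive pair a covering pair. -/
def IsSatChain [PartialOrder α] (c : List α) (x y : α) : Prop :=
  c.head? = some x ∧ c.getLast? = some y ∧ List.Chain' (· ⋖ ·) c

/-- The list of labels used by a chain `c` under the edge-labeling `lam`. -/
def chainLabels {Λ : Type*} (lam : α → α → Λ) (c : List α) : List Λ :=
  (c.zip c.tail).map fun p => lam p.1 p.2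

/-- An SB-labeling of a lattice: an edge-labeling `lam` of covering pairs such that for all
`p ⋖ p₁, p₂` with `p₁ ≠ p₂`: the two labels differ, every saturated chain from `p` to
`p₁ ⊔ p₂` uses both labels, and uses no other label. -/
def IsSBLabeling [Lattice α] {Λ : Type*} (lam : α → α → Λ) : Prop :=
  ∀ p p₁ p₂ : α, p ⋖ p₁ → p ⋖ p₂ → p₁ ≠ p₂ →
    lam p p₁ ≠ lam p p₂ ∧
    ∀ c : List α, IsSatChain c p (p₁ ⊔ p₂) →
      lam p p₁ ∈ chainLabels lam c ∧ lam p p₂ ∈ chainLabels lam c ∧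
      ∀ l ∈ chainLabels lam c, l = lam p p₁ ∨ l = lam p p₂

lemma satchain_le [PartialOrder α] : ∀ (c : List α) {x y : α}, IsSatChain c x y → x ≤ y
  | [], x, y, h => by simp [IsSatChain] at h
  | [a], x, y, h => by
      obtain ⟨h1, h2, -⟩ := h
      simp only [List.head?_cons, List.getLast?_singleton, Option.some.injEq] at h1 h2
      subst h1; subst h2; exact le_rfl
  | a :: b :: t, x, y, h => by
      obtain ⟨h1, h2, h3⟩ := h
      simp only [List.head?_cons, Option.some.injEq] at h1
      rw [List.Chain', List.isChain_cons_cons] at h3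
      rw [List.getLast?_cons_cons] at h2
      have hb : b ≤ y := satchain_le (b :: t) ⟨rfl, h2, h3.2⟩
      subst h1
      exact le_trans h3.1.le hb

lemma satchain_cov [PartialOrder α] (c : List α) {x y : α}
    (h : IsSatChain c x y) (hxy : x ⋖ y) : c = [x, y] := by
  match c with
  | [] => simp [IsSatChain] at h
  | [a] =>
      obtain ⟨h1, h2, -⟩ := h
      simp only [List.head?_cons, List.getLast?_singleton, Option.some.injEq] at h1 h2
      exact absurd (h1.symm.trans h2) hxy.ne
  | a :: b :: t =>
      obtain ⟨h1, h2, h3⟩ := h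
      simp only [List.head?_cons, Option.some.injEq] at h1
      rw [List.Chain', List.isChain_cons_cons] at h3
      rw [List.getLast?_cons_cons] at h2
      subst h1
      have hb : b ≤ y := satchain_le (b :: t) ⟨rfl, h2, h3.2⟩
      have hby : b = y := by
        rcases eq_or_lt_of_le hb with h' | h'
        · exact h'
        · exact (hxy.2 h3.1.lt h').elim
      subst hby
      match t with
      | [] => rfl
      | w :: t' =>
          rw [List.isChain_cons_cons] at h3
          rw [List.getLast?_cons_cons] at h2
          have hw : w ≤ b := satchain_le (w :: t') ⟨rfl, h2, h3.2.2⟩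
          exact absurd hw (not_le_of_gt h3.2.1.lt)

lemma cov_meet [Lattice α] {p a b : α} (h1 : p ⋖ a) (h2 : p ⋖ b) (hne : a ≠ b) :
    a ⊓ b = p := by
  have hp : p ≤ a ⊓ b := le_inf h1.le h2.le
  rcases eq_or_lt_of_le hp with h | h
  · exact h.symm
  · have ha : a ⊓ b = a := by
      rcases eq_or_lt_of_le (inf_le_left : a ⊓ b ≤ a) with h' | h'
      · exact h'
      · exact (h1.2 h h').elim
    have hab : a ≤ b := by rw [← ha]; exact inf_le_right
    rcases eq_or_lt_of_le hab with h' | h'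
    · exact absurd h' hne
    · exact (h2.2 h1.lt h').elim

/-- In a finite join-distributive lattice, for `p` covered by distinct `p₁` and `p₂`, every
saturated chain from `p` to `p₁ ⊔ p₂` has length exactly 2 (three elements), passing
through exactly one of `p₁`, `p₂`. -/
theorem stmt11 [Lattice α] [Fintype α]
    (hmsd : ∀ p q r : α, p ⊓ q = p ⊓ r → p ⊓ q = p ⊓ (q ⊔ r))
    (husm : ∀ p q : α, (p ⊓ q) ⋖ p → (p ⊓ q) ⋖ q → (p ⋖ (p ⊔ q) ∧ q ⋖ (p ⊔ q)))
    (p p₁ p₂ : α) (h1 : p ⋖ p₁) (h2 : p ⋖ p₂) (hne : p₁ ≠ p₂)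
    (c : List α) (hc : IsSatChain c p (p₁ ⊔ p₂)) :
    c.length = 3 ∧ ((p₁ ∈ c ∧ p₂ ∉ c) ∨ (p₂ ∈ c ∧ p₁ ∉ c)) := by
  have hm : p₁ ⊓ p₂ = p := cov_meet h1 h2 hne
  have hu := husm p₁ p₂ (by rw [hm]; exact h1) (by rw [hm]; exact h2)
  have hplt : p < p₁ ⊔ p₂ := lt_of_lt_of_le h1.lt le_sup_left
  obtain ⟨hh, hl, hch⟩ := hc
  match c with
  | [] => simp at hh
  | [a] =>
      simp only [List.head?_cons, List.getLast?_singleton, Option.some.injEq] at hh hl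
      exact absurd (hh.symm.trans hl) hplt.ne
  | a :: b :: t =>
      simp only [List.head?_cons, Option.some.injEq] at hh
      rw [List.Chain', List.isChain_cons_cons] at hch
      rw [List.getLast?_cons_cons] at hl
      cases hh
      have hsat : IsSatChain (b :: t) b (p₁ ⊔ p₂) := ⟨rfl, hl, hch.2⟩
      have hble : b ≤ p₁ ⊔ p₂ := satchain_le _ hsat
      have hpb : p ⋖ b := hch.1
      have hbmem : b = p₁ ∨ b = p₂ := by
        by_contra hcon
        push_neg at hcon
        have e1 : b ⊓ p₁ = p := cov_meet hpb h1 hcon.1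
        have e2 : b ⊓ p₂ = p := cov_meet hpb h2 hcon.2
        have e3 := hmsd b p₁ p₂ (e1.trans e2.symm)
        rw [e1, inf_eq_left.mpr hble] at e3
        exact hpb.lt.ne e3
      rcases hbmem with hb | hb
      · subst hb
        have := satchain_cov _ hsat hu.1
        rw [this]
        refine ⟨rfl, Or.inl ⟨by simp, ?_⟩⟩
        simp only [List.mem_cons, List.not_mem_nil, or_false]
        push_neg
        exact ⟨h2.lt.ne', hne.symm, hu.2.lt.ne⟩
      · subst hb
        have := satchain_cov _ hsat hu.2
        rw [this]
        refine ⟨rfl, Or.inr ⟨by simp, ?_⟩⟩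
        simp only [List.mem_cons, List.not_mem_nil, or_false]
        push_neg
        exact ⟨h1.lt.ne', hne, hu.1.lt.ne⟩
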